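/- Let C be a well-powered category with wide pullbacks and let F : C ⥤ C preserve monomorphisms. Then F preserves intersections (the induced maps on subobject lattices preserve arbitrary infima) if and only if F has least bounds, i.e., for every morphism f : X ⟶ F.obj Y there exists a least subobject m of Y such that f factors through F.map m.arrow. -/

import Mathlib

open CategoryTheory CategoryTheory.Limits

universe w v u

variable {C : Type u} [Category.{v} C]

/-- A functor preserves monomorphisms. -/
def PreservesMonos (F : C ⥤ C) : Prop :=
  ∀ ⦃X Y : C⦄ (f : X ⟶ Y), Mono f → Mono (F.map f)

/-- The induced map on subobject lattices of a mono-preserving functor. -/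
noncomputable def subMap {F : C ⥤ C} (hF : PreservesMonos F) {Y : C} (m : Subobject Y) :
    Subobject (F.obj Y) :=
  letI : Mono (F.map m.arrow) := hF m.arrow inferInstance
  Subobject.mk (F.map m.arrow)

/-- A mono-preserving functor preserves intersections if the induced maps on subobject
lattices preserve arbitrary infima. -/
def PreservesIntersections [WellPowered.{v} C] [HasWidePullbacks.{v} C] {F : C ⥤ C}
    (hF : PreservesMonos F) : Prop :=
  ∀ ⦃Y : C⦄ (s : Set (Subobject Y)), subMap hF (sInf s) = sInf (subMap hF '' s)

/-- The "next time" operator of a morphism `f : X ⟶ F.obj Y`. -/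
noncomputable def nextTime [HasPullbacks C] {F : C ⥤ C} (hF : PreservesMonos F)
    {X Y : C} (f : X ⟶ F.obj Y) (n : Subobject Y) : Subobject X :=
  (Subobject.pullback f).obj (subMap hF n)

/-- The "previous time" operator of a morphism `f : X ⟶ F.obj Y`: it sends a subobject `m` of
`X` to the least subobject `n` of `Y` such that `m.arrow ≫ f` factors through `F.map n.arrow`. -/
noncomputable def prevTime [WellPowered.{v} C] [HasWidePullbacks.{v} C] (F : C ⥤ C)
    {X Y : C} (f : X ⟶ F.obj Y) (m : Subobject X) : Subobject Y :=
  sInf {n : Subobject Y | ∃ g : (m : C) ⟶ F.obj (n : C), g ≫ F.map n.arrow = m.arrow ≫ f}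

section Aux

variable [WellPowered.{v} C] [HasWidePullbacks.{v} C]

/-- `subMap` is monotone. -/
theorem subMap_mono {F : C ⥤ C} (hF : PreservesMonos F) {Y : C} {m n : Subobject Y}
    (h : m ≤ n) : subMap hF m ≤ subMap hF n := by
  letI : Mono (F.map m.arrow) := hF m.arrow inferInstance
  letI : Mono (F.map n.arrow) := hF n.arrow inferInstance
  exact Subobject.mk_le_mk_of_comm (F.map (Subobject.ofLE m n h))
    (by rw [← F.map_comp, Subobject.ofLE_arrow])

/-- If a morphism factors through every member of a set of subobjects, it factors through
their intersection. -/
theorem factors_sInf_of_factors {A X : C} (s : Set (Subobject A)) (f : X ⟶ A)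
    (h : ∀ g ∈ s, ∃ k : X ⟶ (g : C), k ≫ g.arrow = f) :
    ∃ k : X ⟶ ((sInf s : Subobject A) : C), k ≫ (sInf s : Subobject A).arrow = f := by
  choose k hk using h
  have mem : ∀ j : (equivShrink.{v} (Subobject A)) '' s,
      ((equivShrink.{v} (Subobject A)).symm j : Subobject A) ∈ s := fun j =>
    (Subobject.symm_apply_mem_iff_mem_image _ _ _).2 j.2
  let c : Cone (Subobject.wideCospan.{v} s) :=
    WidePullbackShape.mkCone f (fun j => k _ (mem j)) (fun j => hk _ (mem j))
  have hsInf : (Subobject.sInf.{v} s : Subobject A) = Subobject.mk (Subobject.widePullbackι.{v} s) := rfl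
  refine ⟨limit.lift _ c ≫ (Subobject.underlyingIso (Subobject.widePullbackι.{v} s)).inv, ?_⟩
  show (limit.lift _ c ≫ _) ≫ (Subobject.mk (Subobject.widePullbackι.{v} s)).arrow = f
  refine (Category.assoc _ _ _).trans ((congrArg (fun x : Subobject.widePullback.{v} s ⟶ A => limit.lift _ c ≫ x) (Subobject.underlyingIso_arrow (Subobject.widePullbackι.{v} s))).trans ?_)
  exact limit.lift_π c none

end Aux

/-- An `I`-pointed coalgebra `(X, c, i)` is reachable if every monomorphic homomorphism of
`I`-pointed coalgebras into it is an isomorphism. -/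
def Reachable (F : C ⥤ C) {I X : C} (c : X ⟶ F.obj X) (i : I ⟶ X) : Prop :=
  ∀ ⦃S : C⦄ (s : S ⟶ F.obj S) (iS : I ⟶ S) (m : S ⟶ X),
    Mono m → s ≫ F.map m = m ≫ c → iS ≫ m = i → IsIso m
/-- **Gumm's characterization:** a mono-preserving functor preserves intersections iff it has
least bounds, i.e.\ for every `f : X ⟶ F.obj Y` there is a least subobject `m` of `Y` such
that `f` factors through `F.map m.arrow`. -/
theorem preservesIntersections_iff_hasLeastBounds
    [WellPowered.{v} C] [HasWidePullbacks.{v} C]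
    (F : C ⥤ C) (hF : PreservesMonos F) :
    PreservesIntersections hF ↔
      ∀ ⦃X Y : C⦄ (f : X ⟶ F.obj Y),
        ∃ m : Subobject Y,
          IsLeast {n : Subobject Y | ∃ g : X ⟶ F.obj (n : C), g ≫ F.map n.arrow = f} m := by
  constructor
  · intro hPI X Y f
    refine ⟨sInf {n : Subobject Y | ∃ g : X ⟶ F.obj (n : C), g ≫ F.map n.arrow = f}, ?_, ?_⟩
    · -- membership: f factors through F.map (sInf S).arrow
      set S := {n : Subobject Y | ∃ g : X ⟶ F.obj (n : C), g ≫ F.map n.arrow = f} with hS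
      have key : ∃ kk : X ⟶ ((sInf (subMap hF '' S) : Subobject (F.obj Y)) : C),
          kk ≫ (sInf (subMap hF '' S) : Subobject (F.obj Y)).arrow = f := by
        apply factors_sInf_of_factors
        rintro P ⟨n, hn, rfl⟩
        obtain ⟨g, hg⟩ := hn
        letI : Mono (F.map n.arrow) := hF n.arrow inferInstance
        exact ⟨g ≫ (Subobject.underlyingIso (F.map n.arrow)).inv, by
          refine (Category.assoc _ _ _).trans ?_
          show g ≫ _ ≫ (Subobject.mk (F.map n.arrow)).arrow = f
          rw [Subobject.underlyingIso_arrow, hg]⟩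
      obtain ⟨kk, hkk⟩ := key
      letI : Mono (F.map (sInf S).arrow) := hF (sInf S).arrow inferInstance
      have hle : sInf (subMap hF '' S) ≤ Subobject.mk (F.map (sInf S).arrow) :=
        le_of_eq (hPI S).symm
      refine ⟨kk ≫ Subobject.ofLE _ _ hle ≫
        (Subobject.underlyingIso (F.map (sInf S).arrow)).hom, ?_⟩
      rw [Category.assoc, Category.assoc, Subobject.underlyingIso_hom_comp_eq_mk,
        Subobject.ofLE_arrow]
      exact hkk
    · intro n hn
      exact Subobject.sInf_le _ _ hn
  · intro hLB Y s
    apply le_antisymm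
    · apply Subobject.le_sInf
      rintro P ⟨n, hn, rfl⟩
      exact subMap_mono hF (Subobject.sInf_le _ _ hn)
    · set P : Subobject (F.obj Y) := sInf (subMap hF '' s) with hP
      obtain ⟨m, hm1, hm2⟩ := hLB P.arrow
      have hms : m ≤ sInf s := by
        apply Subobject.le_sInf
        intro n hn
        apply hm2
        have hle : P ≤ subMap hF n := Subobject.sInf_le _ _ ⟨n, hn, rfl⟩
        letI : Mono (F.map n.arrow) := hF n.arrow inferInstance
        refine ⟨Subobject.ofLE _ _ hle ≫ (Subobject.underlyingIso (F.map n.arrow)).hom, ?_⟩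
        refine (Category.assoc _ _ _).trans ((congrArg (fun x : ((subMap hF n : Subobject _) : C) ⟶ F.obj Y => Subobject.ofLE _ _ hle ≫ x) (Subobject.underlyingIso_hom_comp_eq_mk (F.map n.arrow))).trans ?_)
        exact Subobject.ofLE_arrow hle
      obtain ⟨g, hg⟩ := hm1
      have hPm : P ≤ subMap hF m := by
        letI : Mono (F.map m.arrow) := hF m.arrow inferInstance
        exact Subobject.le_mk_of_comm g hg
      exact hPm.trans (subMap_mono hF hms)
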